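/- Let N be a positive integer. There exists a finite set S of rational numbers contained in the open interval (−1, 1), with |S| = 2N, closed under negation (x ∈ S implies −x ∈ S), and satisfying Σ_{x∈S} x² = N and Σ_{x∈S} x⁴ = 3N/4, if and only if N is of the form 3k with k ≥ 1, or of the form 3k+1 with k ≥ 6, or of the form 3k+2 with k ≥ 3. -/
import Mathlib

set_option maxHeartbeats 1000000 in
section
namespace Cheb5

lemma odd_sq (a : ℤ) (h : a % 2 = 1) : (4:ℤ) ∣ a^2 - 1 := by
  obtain ⟨k, rfl⟩ : ∃ k, a = 2*k+1 := ⟨a/2, by omega⟩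
  exact ⟨k^2+k, by ring⟩

lemma odd_pow4 (a : ℤ) (h : a % 2 = 1) : (16:ℤ) ∣ a^4 - 1 := by
  obtain ⟨k, rfl⟩ : ∃ k, a = 2*k+1 := ⟨a/2, by omega⟩
  obtain ⟨r, hr⟩ : Even (k*(k+1)) := Int.even_mul_succ_self k
  exact ⟨r*(2*k^2+2*k+1), by linear_combination (8*(2*k^2+2*k+1)) * hr⟩

lemma odd_pow4' (a : ℤ) (h : a % 2 = 1) : (32:ℤ) ∣ a^4 - 2*a^2 + 1 := by
  obtain ⟨k, rfl⟩ : ∃ k, a = 2*k+1 := ⟨a/2, by omega⟩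
  obtain ⟨r, hr⟩ : Even (k*(k+1)) := Int.even_mul_succ_self k
  exact ⟨2*r^2, by linear_combination (16*(k^2+k) + 32*r) * hr⟩

lemma sum_pow4_mod (A : Finset ℤ) :
    (16:ℤ) ∣ (∑ a ∈ A, a^4) - ((A.filter (fun a => a % 2 = 1)).card : ℤ) := by
  classical
  have hsplit := Finset.sum_filter_add_sum_filter_not A (fun a => a % 2 = 1) (fun a => (a:ℤ)^4)
  have hcard : (((A.filter (fun a => a % 2 = 1)).card : ℤ))
      = ∑ _a ∈ A.filter (fun a => a % 2 = 1), (1:ℤ) := by simp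
  have h1 : (16:ℤ) ∣ ∑ a ∈ A.filter (fun a => a % 2 = 1), (a^4 - 1) :=
    Finset.dvd_sum (fun a ha => odd_pow4 a (Finset.mem_filter.mp ha).2)
  have h2 : (16:ℤ) ∣ ∑ a ∈ A.filter (fun a => ¬ a % 2 = 1), a^4 :=
    Finset.dvd_sum (fun a ha => by
      obtain ⟨k, rfl⟩ : ∃ k, a = 2*k := ⟨a/2, by have := (Finset.mem_filter.mp ha).2; omega⟩
      exact ⟨k^4, by ring⟩)
  have hE : (∑ a ∈ A, a^4) - (((A.filter (fun a => a % 2 = 1)).card : ℤ))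
      = (∑ a ∈ A.filter (fun a => a % 2 = 1), (a^4 - 1))
        + ∑ a ∈ A.filter (fun a => ¬ a % 2 = 1), a^4 := by
    rw [Finset.sum_sub_distrib, hcard]
    linarith [hsplit]
  rw [hE]; exact dvd_add h1 h2

lemma sum_sq_mod (A : Finset ℤ) :
    (4:ℤ) ∣ (∑ a ∈ A, a^2) - ((A.filter (fun a => a % 2 = 1)).card : ℤ) := by
  classical
  have hsplit := Finset.sum_filter_add_sum_filter_not A (fun a => a % 2 = 1) (fun a => (a:ℤ)^2)
  have hcard : (((A.filter (fun a => a % 2 = 1)).card : ℤ))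
      = ∑ _a ∈ A.filter (fun a => a % 2 = 1), (1:ℤ) := by simp
  have h1 : (4:ℤ) ∣ ∑ a ∈ A.filter (fun a => a % 2 = 1), (a^2 - 1) :=
    Finset.dvd_sum (fun a ha => odd_sq a (Finset.mem_filter.mp ha).2)
  have h2 : (4:ℤ) ∣ ∑ a ∈ A.filter (fun a => ¬ a % 2 = 1), a^2 :=
    Finset.dvd_sum (fun a ha => by
      obtain ⟨k, rfl⟩ : ∃ k, a = 2*k := ⟨a/2, by have := (Finset.mem_filter.mp ha).2; omega⟩
      exact ⟨k^2, by ring⟩)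
  have hE : (∑ a ∈ A, a^2) - (((A.filter (fun a => a % 2 = 1)).card : ℤ))
      = (∑ a ∈ A.filter (fun a => a % 2 = 1), (a^2 - 1))
        + ∑ a ∈ A.filter (fun a => ¬ a % 2 = 1), a^2 := by
    rw [Finset.sum_sub_distrib, hcard]
    linarith [hsplit]
  rw [hE]; exact dvd_add h1 h2

lemma sum_allodd (A : Finset ℤ) (h : ∀ a ∈ A, a % 2 = 1) :
    (32:ℤ) ∣ (∑ a ∈ A, a^4) - 2*(∑ a ∈ A, a^2) + (A.card : ℤ) := by
  have hE : (∑ a ∈ A, a^4) - 2*(∑ a ∈ A, a^2) + (A.card : ℤ)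
      = ∑ a ∈ A, (a^4 - 2*a^2 + 1) := by
    rw [Finset.sum_add_distrib, Finset.sum_sub_distrib, ← Finset.mul_sum]
    simp
  rw [hE]
  exact Finset.dvd_sum (fun a ha => odd_pow4' a (h a ha))


lemma noSol (N : ℕ) (hN : N = 1 ∨ N = 2 ∨ N = 4 ∨ N = 5 ∨ N = 7 ∨ N = 8 ∨ N = 10 ∨ N = 13 ∨ N = 16)
    (c : ℤ) (hc : 0 < c) (A : Finset ℤ) (hcard : A.card = N)
    (h2 : 2 * (∑ a ∈ A, a^2) = N * c^2)
    (h8 : 8 * (∑ a ∈ A, a^4) = 3 * N * c^4)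
    (hodd : 2 ∣ c → ∃ a ∈ A, a % 2 = 1) : False := by
  classical
  set Y := (∑ a ∈ A, a^2) with hY
  set X := (∑ a ∈ A, a^4) with hX
  set r := (A.filter (fun a => a % 2 = 1)).card with hr
  have K1 : (16:ℤ) ∣ X - (r:ℤ) := sum_pow4_mod A
  have K2 : (4:ℤ) ∣ Y - (r:ℤ) := sum_sq_mod A
  have hrN : r ≤ N := hcard ▸ Finset.card_filter_le A _
  have K3 : r = N → (32:ℤ) ∣ X - 2*Y + (N:ℤ) := by
    intro hrn
    have hfl : A.filter (fun a => a % 2 = 1) = A :=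
      Finset.eq_of_subset_of_card_le (Finset.filter_subset _ _) (by omega)
    have hall : ∀ a ∈ A, a % 2 = 1 := fun a ha => by
      rw [← hfl] at ha
      exact (Finset.mem_filter.mp ha).2
    simpa [hcard] using sum_allodd A hall
  rcases Int.even_or_odd c with ⟨d, hd⟩ | ⟨d, hd⟩
  · -- c even
    have hr1 : 1 ≤ r := by
      obtain ⟨a, ha, hpa⟩ := hodd ⟨d, by omega⟩
      exact Finset.card_pos.mpr ⟨a, Finset.mem_filter.mpr ⟨ha, hpa⟩⟩
    rcases Int.even_or_odd d with ⟨e, he⟩ | ⟨l, hl⟩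
    · -- c = 4e
      have hc2 : c^2 = 16*e^2 := by rw [hd, he]; ring
      have hc4 : c^4 = 256*(e^2*e^2) := by rw [hd, he]; ring
      rw [hc2] at h2; rw [hc4] at h8
      by_cases hrn : r = N
      · have K3' := K3 hrn
        obtain ⟨q, hq⟩ : ∃ q, e^2 = q := ⟨_, rfl⟩
        obtain ⟨w, hw⟩ : ∃ w, e^2*e^2 = w := ⟨_, rfl⟩
        rw [hq] at h2; rw [hw] at h8
        rcases hN with rfl|rfl|rfl|rfl|rfl|rfl|rfl|rfl|rfl <;> omega
      · obtain ⟨q, hq⟩ : ∃ q, e^2 = q := ⟨_, rfl⟩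
        obtain ⟨w, hw⟩ : ∃ w, e^2*e^2 = w := ⟨_, rfl⟩
        rw [hq] at h2; rw [hw] at h8
        rcases hN with rfl|rfl|rfl|rfl|rfl|rfl|rfl|rfl|rfl <;> omega
    · -- d odd: d = 2l+1
      have hd2 : ∃ j, d^2 = 8*j+1 := by
        obtain ⟨s, hs⟩ : Even (l*(l+1)) := Int.even_mul_succ_self l
        exact ⟨s, by rw [hl]; linear_combination 4*hs⟩
      obtain ⟨j, hj⟩ := hd2
      have hd4 : d^4 = 16*(4*j^2+j)+1 := by rw [show d^4 = (d^2)^2 by ring, hj]; ring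
      have hc2 : c^2 = 4*(8*j+1) := by rw [hd, ← hj]; ring
      have hc4 : c^4 = 16*(16*(4*j^2+j)+1) := by rw [hd, ← hd4]; ring
      rw [hc2] at h2; rw [hc4] at h8
      obtain ⟨m, hm⟩ : ∃ 𝓂, 4*j^2+j = 𝓂 := ⟨_, rfl⟩
      rw [hm] at h8
      by_cases hrn : r = N
      · have K3' := K3 hrn
        rcases hN with rfl|rfl|rfl|rfl|rfl|rfl|rfl|rfl|rfl <;> omega
      · rcases hN with rfl|rfl|rfl|rfl|rfl|rfl|rfl|rfl|rfl <;> omega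
  · -- c odd : c = 2d+1
    have hc2 : ∃ j, c^2 = 8*j+1 := by
      obtain ⟨s, hs⟩ : Even (d*(d+1)) := Int.even_mul_succ_self d
      exact ⟨s, by rw [hd]; linear_combination 4*hs⟩
    obtain ⟨j, hj⟩ := hc2
    have hc4 : c^4 = 16*(4*j^2+j)+1 := by rw [show c^4 = (c^2)^2 by ring, hj]; ring
    rw [hj] at h2; rw [hc4] at h8
    obtain ⟨m, hm⟩ : ∃ 𝓂, 4*j^2+j = 𝓂 := ⟨_, rfl⟩
    rw [hm] at h8
    rcases hN with rfl|rfl|rfl|rfl|rfl|rfl|rfl|rfl|rfl <;> omega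


lemma den_dvd_of_mul (x : ℚ) (n : ℤ) (hn : n ≠ 0) (z : ℤ) (hz : x * n = z) : (x.den : ℤ) ∣ n := by
  have hx : x = (z : ℚ) / n := by
    rw [eq_div_iff (by exact_mod_cast hn)]; exact_mod_cast hz
  have := Rat.den_dvd z n
  rwa [Rat.divInt_eq_div, ← hx] at this

lemma halve (N : ℕ) (S : Finset ℚ) (hcard : S.card = 2 * N)
    (hneg : ∀ x ∈ S, -x ∈ S)
    (hs2 : ∑ x ∈ S, x ^ 2 = (N : ℚ)) (hs4 : ∑ x ∈ S, x ^ 4 = 3 * (N : ℚ) / 4) :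
    ∃ P : Finset ℚ, (∀ x ∈ P, 0 < x) ∧ P.card = N ∧
      2 * ∑ x ∈ P, x ^ 2 = (N : ℚ) ∧ 8 * ∑ x ∈ P, x ^ 4 = 3 * (N : ℚ) ∧
      (∀ x ∈ P, x ∈ S) := by
  classical
  set P := S.filter (fun x => 0 < x) with hP
  set F := S.filter (fun x => ¬ 0 < x) with hF
  have hQ : S.filter (fun x => x < 0) = P.image (fun x => -x) := by
    ext y
    simp only [Finset.mem_filter, Finset.mem_image, hP]
    constructor
    · rintro ⟨hyS, hy0⟩
      exact ⟨-y, ⟨hneg y hyS, by linarith⟩, by ring⟩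
    · rintro ⟨x, ⟨hxS, hx0⟩, rfl⟩
      exact ⟨hneg x hxS, by linarith⟩
  have hQcard : (S.filter (fun x => x < 0)).card = P.card := by
    rw [hQ]; exact Finset.card_image_of_injective _ neg_injective
  have hPF : P.card + F.card = 2 * N := by
    rw [hP, hF, ← hcard]; exact Finset.card_filter_add_card_filter_not _
  have h0 : (0:ℚ) ∉ S := by
    intro h0S
    have hFeq : F = insert 0 (S.filter (fun x => x < 0)) := by
      ext y
      simp only [hF, Finset.mem_filter, Finset.mem_insert]
      constructor
      · rintro ⟨hyS, hy⟩
        rcases eq_or_lt_of_le (not_lt.mp hy) with h | h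
        · exact Or.inl h
        · exact Or.inr ⟨hyS, h⟩
      · rintro (rfl | ⟨hyS, hy⟩)
        · exact ⟨h0S, by norm_num⟩
        · exact ⟨hyS, by linarith⟩
    have : F.card = P.card + 1 := by
      rw [hFeq, Finset.card_insert_of_notMem (by simp), hQcard]
    omega
  have hFQ : F = S.filter (fun x => x < 0) := by
    ext y
    simp only [hF, Finset.mem_filter]
    constructor
    · rintro ⟨hyS, hy⟩
      rcases eq_or_lt_of_le (not_lt.mp hy) with h | h
      · exact absurd (h ▸ hyS) h0
      · exact ⟨hyS, h⟩
    · rintro ⟨hyS, hy⟩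
      exact ⟨hyS, by linarith⟩
  have hcardP : P.card = N := by rw [hFQ] at hPF; omega
  have hsum2' : ∑ x ∈ F, x ^ 2 = ∑ x ∈ P, x ^ 2 := by
    rw [hFQ, hQ, Finset.sum_image (fun x _ y _ h => neg_injective h)]
    apply Finset.sum_congr rfl; intros; ring
  have hsum4' : ∑ x ∈ F, x ^ 4 = ∑ x ∈ P, x ^ 4 := by
    rw [hFQ, hQ, Finset.sum_image (fun x _ y _ h => neg_injective h)]
    apply Finset.sum_congr rfl; intros; ring
  have hsplit2 := Finset.sum_filter_add_sum_filter_not S (fun x => 0 < x) (fun x => x ^ 2)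
  have hsplit4 := Finset.sum_filter_add_sum_filter_not S (fun x => 0 < x) (fun x => x ^ 4)
  refine ⟨P, fun x hx => (Finset.mem_filter.mp hx).2, hcardP, ?_, ?_, fun x hx => (Finset.mem_filter.mp hx).1⟩
  · rw [← hs2, ← hsplit2]
    rw [← hP, ← hF] at *
    rw [hsum2']; ring
  · rw [hs4] at *
    have : ∑ x ∈ P, x ^ 4 + ∑ x ∈ F, x ^ 4 = 3 * (N:ℚ) / 4 := by
      rw [← hs4, ← hsplit4]
    rw [hsum4'] at this
    linarith



lemma extract (N : ℕ) (P : Finset ℚ) (hcardP : P.card = N)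
    (h2 : 2 * ∑ x ∈ P, x ^ 2 = (N : ℚ)) (h4 : 8 * ∑ x ∈ P, x ^ 4 = 3 * (N : ℚ)) :
    ∃ (c : ℤ) (A : Finset ℤ), 0 < c ∧ A.card = N ∧
      2 * (∑ a ∈ A, a^2) = N * c^2 ∧ 8 * (∑ a ∈ A, a^4) = 3 * N * c^4 ∧
      (2 ∣ c → ∃ a ∈ A, a % 2 = 1) := by
  classical
  set c : ℕ := P.lcm Rat.den with hc
  have hc0 : c ≠ 0 := by
    rw [hc]
    intro h
    rw [Finset.lcm_eq_zero_iff] at h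
    obtain ⟨x, _, hx⟩ := h
    exact x.den_nz hx
  have hcQ : ((c:ℚ)) ≠ 0 := by exact_mod_cast hc0
  set f : ℚ → ℤ := fun x => x.num * ((c:ℤ) / (x.den:ℤ)) with hf
  have hfx : ∀ x ∈ P, ((f x : ℤ) : ℚ) = x * c := by
    intro x hx
    have hdvd : (x.den:ℤ) ∣ (c:ℤ) := Int.natCast_dvd_natCast.mpr (Finset.dvd_lcm hx)
    obtain ⟨t, ht⟩ := hdvd
    have hden0 : (x.den:ℤ) ≠ 0 := by exact_mod_cast x.den_nz
    have hdiv : (c:ℤ) / (x.den:ℤ) = t := by rw [ht]; exact Int.mul_ediv_cancel_left _ hden0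
    have hnum : (x.num:ℚ) = x * (x.den:ℚ) :=
      (div_eq_iff (show ((x.den:ℚ)) ≠ 0 by exact_mod_cast x.den_nz)).mp (Rat.num_div_den x)
    have hct : ((c:ℤ):ℚ) = (x.den:ℚ) * (t:ℚ) := by exact_mod_cast congrArg (fun z : ℤ => (z:ℚ)) ht
    rw [hf]
    simp only [hdiv]
    push_cast
    rw [hnum]
    push_cast at hct
    rw [show ((c:ℚ)) = (x.den:ℚ) * (t:ℚ) from by exact_mod_cast hct]
    ring
  have hinj : ∀ x ∈ P, ∀ y ∈ P, f x = f y → x = y := by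
    intro x hx y hy hxy
    have : x * c = y * c := by rw [← hfx x hx, ← hfx y hy, hxy]
    exact mul_right_cancel₀ hcQ this
  set A : Finset ℤ := P.image f with hA
  have hcardA : A.card = N := by rw [hA, Finset.card_image_of_injOn hinj, hcardP]
  have hs2 : ∑ a ∈ A, a^2 = ∑ x ∈ P, (f x)^2 := Finset.sum_image (fun x hx y hy => hinj x hx y hy)
  have hs4 : ∑ a ∈ A, a^4 = ∑ x ∈ P, (f x)^4 := Finset.sum_image (fun x hx y hy => hinj x hx y hy)
  have hcast2 : ((∑ a ∈ A, a^2 : ℤ) : ℚ) = (∑ x ∈ P, x^2) * c^2 := by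
    rw [hs2]
    push_cast
    rw [Finset.sum_mul]
    apply Finset.sum_congr rfl
    intro x hx
    rw [show ((f x : ℤ):ℚ)^2 = (((f x : ℤ):ℚ))^2 from rfl, hfx x hx]
    ring
  have hcast4 : ((∑ a ∈ A, a^4 : ℤ) : ℚ) = (∑ x ∈ P, x^4) * c^4 := by
    rw [hs4]
    push_cast
    rw [Finset.sum_mul]
    apply Finset.sum_congr rfl
    intro x hx
    rw [show ((f x : ℤ):ℚ)^4 = (((f x : ℤ):ℚ))^4 from rfl, hfx x hx]
    ring
  refine ⟨(c:ℤ), A, by positivity, hcardA, ?_, ?_, ?_⟩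
  · have : ((2 * ∑ a ∈ A, a^2 : ℤ) : ℚ) = ((N * (c:ℤ)^2 : ℤ) : ℚ) := by
      push_cast
      push_cast at hcast2
      rw [hcast2]
      push_cast at h2
      linear_combination ((c:ℚ)^2) * h2
    exact_mod_cast this
  · have : ((8 * ∑ a ∈ A, a^4 : ℤ) : ℚ) = ((3 * N * (c:ℤ)^4 : ℤ) : ℚ) := by
      push_cast
      push_cast at hcast4
      rw [hcast4]
      push_cast at h4
      linear_combination ((c:ℚ)^4) * h4
    exact_mod_cast this
  · intro hdvd
    by_contra hnone
    push_neg at hnone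
    have hallev : ∀ x ∈ P, ∃ g : ℤ, f x = 2 * g := by
      intro x hx
      have := hnone (f x) (Finset.mem_image_of_mem f hx)
      exact ⟨f x / 2, by omega⟩
    obtain ⟨c', hc'⟩ : ∃ c' : ℕ, c = 2 * c' := by
      obtain ⟨t, ht⟩ := hdvd
      exact ⟨t.toNat, by omega⟩
    have hc'0 : c' ≠ 0 := by omega
    have hdl : ∀ x ∈ P, x.den ∣ c' := by
      intro x hx
      obtain ⟨g, hg⟩ := hallev x hx
      have hxc : x * ((c':ℕ):ℤ) = (g:ℚ) := by
        have h1 : x * c = ((2*g : ℤ) : ℚ) := by rw [← hg]; exact (hfx x hx).symm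
        push_cast at h1 ⊢
        have : (c:ℚ) = 2 * (c':ℚ) := by exact_mod_cast hc'
        rw [this] at h1
        linarith
      have := den_dvd_of_mul x ((c':ℕ):ℤ) (by exact_mod_cast hc'0) g hxc
      exact_mod_cast this
    have : c ∣ c' := Finset.lcm_dvd hdl
    have := Nat.le_of_dvd (Nat.pos_of_ne_zero hc'0) this
    omega





def q1 (m : ℕ) : ℚ := ((m:ℚ)^2 - 3)/((m:ℚ)^2+3)
def q2 (m : ℕ) : ℚ := ((m:ℚ)^2 - 6*(m:ℚ) - 3)/(2*((m:ℚ)^2+3))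
def q3 (m : ℕ) : ℚ := ((m:ℚ)^2 + 6*(m:ℚ) - 3)/(2*((m:ℚ)^2+3))

def zL : ℚ := 993997/2000006
def zR : ℚ := 1005997/2000006
def zP : ℚ := 999997/1000003

def Ok (x : ℚ) : Prop := (0 < x ∧ x < zL) ∨ x = 1/2 ∨ (zR < x ∧ x < zP)

variable {m m' : ℕ}

lemma hMcast (hm : 1000 ≤ m) : (1000:ℚ) ≤ (m:ℚ) := by exact_mod_cast hm

lemma den_pos : (0:ℚ) < (m:ℚ)^2 + 3 := by positivity

lemma q2_pos (hm : 1000 ≤ m) : 0 < q2 m := by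
  have hM := hMcast hm
  apply div_pos _ (by positivity)
  nlinarith

lemma q2_lb (hm : 1000 ≤ m) : zL ≤ q2 m := by
  have hM := hMcast hm
  rw [zL, q2, div_le_div_iff₀ (by norm_num) (by positivity)]
  nlinarith [mul_nonneg (sub_nonneg.mpr hM) (show (0:ℚ) ≤ 1001*(m:ℚ) + 997 by nlinarith)]

lemma q2_ub (hm : 1000 ≤ m) : q2 m < 1/2 := by
  have hM := hMcast hm
  rw [q2, div_lt_div_iff₀ (by positivity) (by norm_num)]
  nlinarith

lemma q3_lb (hm : 1000 ≤ m) : 1/2 < q3 m := by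
  have hM := hMcast hm
  rw [q3, div_lt_div_iff₀ (by norm_num) (by positivity)]
  nlinarith

lemma q3_ub (hm : 1000 ≤ m) : q3 m ≤ zR := by
  have hM := hMcast hm
  rw [zR, q3, div_le_div_iff₀ (by positivity) (by norm_num)]
  nlinarith [mul_nonneg (sub_nonneg.mpr hM) (show (0:ℚ) ≤ 999*(m:ℚ) - 1003 by nlinarith)]

lemma q1_lb (hm : 1000 ≤ m) : zP ≤ q1 m := by
  have hM := hMcast hm
  rw [zP, q1, div_le_div_iff₀ (by norm_num) (by positivity)]
  nlinarith [sq_nonneg ((m:ℚ) - 1000)]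

lemma q1_ub : q1 m < 1 := by
  rw [q1, div_lt_one (by positivity)]
  linarith

lemma zRzP : zR < zP := by norm_num [zR, zP]
lemma zLhalf : zL < 1/2 := by norm_num [zL]
lemma zRhalf : 1/2 < zR := by norm_num [zR]
lemma zPhalf : 1/2 < zP := lt_trans zRhalf zRzP

lemma q2_lt_q3 (hm : 1000 ≤ m) (hm' : 1000 ≤ m') : q2 m < q3 m' :=
  lt_trans (q2_ub hm) (q3_lb hm')

lemma q3_lt_q1 (hm : 1000 ≤ m) (hm' : 1000 ≤ m') : q3 m < q1 m' :=
  lt_of_le_of_lt (q3_ub hm) (lt_of_lt_of_le zRzP (q1_lb hm'))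

lemma q2_lt_q1 (hm : 1000 ≤ m) (hm' : 1000 ≤ m') : q2 m < q1 m' :=
  lt_trans (q2_lt_q3 hm hm) (q3_lt_q1 hm hm')

def blockP (m : ℕ) : Finset ℚ := {q1 m, q3 m, q2 m}

lemma blockP_card (hm : 1000 ≤ m) : (blockP m).card = 3 := by
  rw [blockP]
  rw [Finset.card_insert_of_notMem, Finset.card_insert_of_notMem, Finset.card_singleton]
  · simp only [Finset.mem_singleton]
    exact ne_of_gt (q2_lt_q3 hm hm)
  · simp only [Finset.mem_insert, Finset.mem_singleton]
    push_neg
    exact ⟨ne_of_gt (q3_lt_q1 hm hm), ne_of_gt (q2_lt_q1 hm hm)⟩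

lemma blockP_sum2 (hm : 1000 ≤ m) : ∑ x ∈ blockP m, x^2 = 3/2 := by
  rw [blockP]
  rw [Finset.sum_insert (by
    simp only [Finset.mem_insert, Finset.mem_singleton]
    push_neg
    exact ⟨ne_of_gt (q3_lt_q1 hm hm), ne_of_gt (q2_lt_q1 hm hm)⟩),
    Finset.sum_insert (by
    simp only [Finset.mem_singleton]
    exact ne_of_gt (q2_lt_q3 hm hm)), Finset.sum_singleton]
  rw [q1, q2, q3]
  have h : ((m:ℚ)^2+3) ≠ 0 := by positivity
  field_simp
  ring

lemma blockP_sum4 (hm : 1000 ≤ m) : ∑ x ∈ blockP m, x^4 = 9/8 := by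
  rw [blockP]
  rw [Finset.sum_insert (by
    simp only [Finset.mem_insert, Finset.mem_singleton]
    push_neg
    exact ⟨ne_of_gt (q3_lt_q1 hm hm), ne_of_gt (q2_lt_q1 hm hm)⟩),
    Finset.sum_insert (by
    simp only [Finset.mem_singleton]
    exact ne_of_gt (q2_lt_q3 hm hm)), Finset.sum_singleton]
  rw [q1, q2, q3]
  have h : ((m:ℚ)^2+3) ≠ 0 := by positivity
  field_simp
  ring

lemma blockP_bounds (hm : 1000 ≤ m) : ∀ x ∈ blockP m, 0 < x ∧ x < 1 := by
  intro x hx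
  rw [blockP] at hx
  simp only [Finset.mem_insert, Finset.mem_singleton] at hx
  rcases hx with rfl | rfl | rfl
  · exact ⟨lt_trans (q2_pos hm) (q2_lt_q1 hm hm), q1_ub⟩
  · exact ⟨lt_trans (q2_pos hm) (q2_lt_q3 hm hm), lt_trans (q3_lt_q1 hm hm) q1_ub⟩
  · exact ⟨q2_pos hm, lt_trans (q2_lt_q1 hm hm) q1_ub⟩

lemma ok_notin_block (x : ℚ) (hx : Ok x) (hm : 1000 ≤ m) : x ∉ blockP m := by
  intro hmem
  rw [blockP] at hmem
  simp only [Finset.mem_insert, Finset.mem_singleton] at hmem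
  have hq1 := q1_lb hm
  have hq2l := q2_lb hm
  have hq2u := q2_ub hm
  have hq3l := q3_lb hm
  have hq3u := q3_ub hm
  have h1 := zRzP
  have h2 := zLhalf
  have h3 := zRhalf
  rcases hmem with rfl | rfl | rfl <;>
    rcases hx with ⟨ha, hb⟩ | heq | ⟨ha, hb⟩ <;> linarith


lemma q1_inj (hm : 1000 ≤ m) (hm' : 1000 ≤ m') (h : q1 m = q1 m') : m = m' := by
  have hM := hMcast hm
  have hM' := hMcast hm'
  rw [q1, q1, div_eq_div_iff (by positivity) (by positivity)] at h
  have hfac : ((m:ℚ) - (m':ℚ)) * ((m:ℚ) + (m':ℚ)) = 0 := by linear_combination h / 6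
  rcases mul_eq_zero.mp hfac with h0 | h0
  · exact_mod_cast sub_eq_zero.mp h0
  · nlinarith

lemma q2_inj (hm : 1000 ≤ m) (hm' : 1000 ≤ m') (h : q2 m = q2 m') : m = m' := by
  have hM := hMcast hm
  have hM' := hMcast hm'
  rw [q2, q2, div_eq_div_iff (by positivity) (by positivity)] at h
  have hfac : ((m:ℚ) - (m':ℚ)) * ((m:ℚ) + (m':ℚ) + (m:ℚ)*(m':ℚ) - 3) = 0 := by
    linear_combination h / 12
  rcases mul_eq_zero.mp hfac with h0 | h0
  · exact_mod_cast sub_eq_zero.mp h0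
  · nlinarith

lemma q3_inj (hm : 1000 ≤ m) (hm' : 1000 ≤ m') (h : q3 m = q3 m') : m = m' := by
  have hM := hMcast hm
  have hM' := hMcast hm'
  rw [q3, q3, div_eq_div_iff (by positivity) (by positivity)] at h
  have hfac : ((m:ℚ) - (m':ℚ)) * ((m:ℚ) + (m':ℚ) - (m:ℚ)*(m':ℚ) + 3) = 0 := by
    linear_combination h / 12
  rcases mul_eq_zero.mp hfac with h0 | h0
  · exact_mod_cast sub_eq_zero.mp h0
  · nlinarith [mul_nonneg (sub_nonneg.mpr hM) (sub_nonneg.mpr hM')]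

lemma blockP_disj (hm : 1000 ≤ m) (hm' : 1000 ≤ m') (hne : m ≠ m') :
    Disjoint (blockP m) (blockP m') := by
  rw [Finset.disjoint_left]
  intro x hx hx'
  rw [blockP] at hx hx'
  simp only [Finset.mem_insert, Finset.mem_singleton] at hx hx'
  rcases hx with rfl | rfl | rfl <;> rcases hx' with heq | heq | heq
  · exact hne (q1_inj hm hm' heq)
  · exact absurd heq.symm (ne_of_lt (q3_lt_q1 hm' hm))
  · exact absurd heq.symm (ne_of_lt (q2_lt_q1 hm' hm))
  · exact absurd heq (ne_of_lt (q3_lt_q1 hm hm'))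
  · exact hne (q3_inj hm hm' heq)
  · exact absurd heq.symm (ne_of_lt (q2_lt_q3 hm' hm))
  · exact absurd heq (ne_of_lt (q2_lt_q1 hm hm'))
  · exact absurd heq (ne_of_lt (q2_lt_q3 hm hm'))
  · exact hne (q2_inj hm hm' heq)

def BU (k : ℕ) : Finset ℚ := (Finset.range k).biUnion (fun j => blockP (1000+j))

lemma BU_succ (k : ℕ) : BU (k+1) = blockP (1000+k) ∪ BU k := by
  rw [BU, BU, Finset.range_add_one, Finset.biUnion_insert]

lemma BU_mem (k : ℕ) (x : ℚ) (hx : x ∈ BU k) : ∃ m, 1000 ≤ m ∧ x ∈ blockP m := by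
  rw [BU, Finset.mem_biUnion] at hx
  obtain ⟨j, _, hj⟩ := hx
  exact ⟨1000+j, by omega, hj⟩

lemma BU_block_disj (k : ℕ) : Disjoint (blockP (1000+k)) (BU k) := by
  rw [Finset.disjoint_right]
  intro x hx hx'
  rw [BU, Finset.mem_biUnion] at hx
  obtain ⟨j, hjk, hj⟩ := hx
  rw [Finset.mem_range] at hjk
  exact Finset.disjoint_left.mp
    (blockP_disj (show 1000 ≤ 1000+k by omega) (show 1000 ≤ 1000+j by omega) (by omega)) hx' hj

lemma BU_card (k : ℕ) : (BU k).card = 3 * k := by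
  induction k with
  | zero => rfl
  | succ k ih =>
    rw [BU_succ, Finset.card_union_of_disjoint (BU_block_disj k),
      blockP_card (by omega), ih]
    ring

lemma BU_sum2 (k : ℕ) : ∑ x ∈ BU k, x^2 = 3*k/2 := by
  induction k with
  | zero => simp [BU]
  | succ k ih =>
    rw [BU_succ, Finset.sum_union (BU_block_disj k), blockP_sum2 (by omega), ih]
    push_cast
    ring

lemma BU_sum4 (k : ℕ) : ∑ x ∈ BU k, x^4 = 9*k/8 := by
  induction k with
  | zero => simp [BU]
  | succ k ih =>
    rw [BU_succ, Finset.sum_union (BU_block_disj k), blockP_sum4 (by omega), ih]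
    push_cast
    ring

lemma BU_bounds (k : ℕ) : ∀ x ∈ BU k, 0 < x ∧ x < 1 := by
  intro x hx
  obtain ⟨m, hm, hxm⟩ := BU_mem k x hx
  exact blockP_bounds hm x hxm

lemma BU_ok_disj (k : ℕ) (B : Finset ℚ) (hB : ∀ x ∈ B, Ok x) : Disjoint B (BU k) := by
  rw [Finset.disjoint_left]
  intro x hx hx'
  obtain ⟨m, hm, hxm⟩ := BU_mem k x hx'
  exact ok_notin_block x (hB x hx) hm hxm

def TD (B : Finset ℚ) (k : ℕ) : Finset ℚ := B ∪ BU k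

lemma TD_card (B : Finset ℚ) (k : ℕ) (hB : ∀ x ∈ B, Ok x) :
    (TD B k).card = B.card + 3*k := by
  rw [TD, Finset.card_union_of_disjoint (BU_ok_disj k B hB), BU_card]

lemma TD_sum2 (B : Finset ℚ) (k : ℕ) (hB : ∀ x ∈ B, Ok x) :
    ∑ x ∈ TD B k, x^2 = (∑ x ∈ B, x^2) + 3*k/2 := by
  rw [TD, Finset.sum_union (BU_ok_disj k B hB), BU_sum2]

lemma TD_sum4 (B : Finset ℚ) (k : ℕ) (hB : ∀ x ∈ B, Ok x) :
    ∑ x ∈ TD B k, x^4 = (∑ x ∈ B, x^4) + 9*k/8 := by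
  rw [TD, Finset.sum_union (BU_ok_disj k B hB), BU_sum4]

lemma ok_bounds (x : ℚ) (hx : Ok x) : 0 < x ∧ x < 1 := by
  rcases hx with ⟨ha, hb⟩ | rfl | ⟨ha, hb⟩
  · have : zL < 1 := by norm_num [zL]
    exact ⟨ha, lt_trans hb this⟩
  · norm_num
  · have h1 : (0:ℚ) < zR := by norm_num [zR]
    have h2 : zP < 1 := by norm_num [zP]
    exact ⟨lt_trans h1 ha, lt_trans hb h2⟩

lemma TD_bounds (B : Finset ℚ) (k : ℕ) (hB : ∀ x ∈ B, Ok x) :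
    ∀ x ∈ TD B k, 0 < x ∧ x < 1 := by
  intro x hx
  rw [TD, Finset.mem_union] at hx
  rcases hx with hx | hx
  · exact ok_bounds x (hB x hx)
  · exact BU_bounds k x hx


def A11 : Finset ℤ := {7,12,22,28,58,59,64,68,72,74,76}
def A19 : Finset ℤ := {12,14,16,18,30,36,46,54,60,66,70,76,78,80,84,86,87,88,89}
def B11 : Finset ℚ := A11.image (fun a : ℤ => (a:ℚ)/78)
def B19 : Finset ℚ := A19.image (fun a : ℤ => (a:ℚ)/90)

lemma cast_div_inj (c : ℚ) (hc : c ≠ 0) : Function.Injective (fun a : ℤ => (a:ℚ)/c) := by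
  intro a b h
  simp only at h
  rw [div_eq_div_iff hc hc] at h
  have : (a:ℚ) = b := by
    have := mul_right_cancel₀ hc h
    exact this
  exact_mod_cast this

lemma B11_card : B11.card = 11 := by
  rw [B11, Finset.card_image_of_injective _ (cast_div_inj 78 (by norm_num))]
  decide

lemma B19_card : B19.card = 19 := by
  rw [B19, Finset.card_image_of_injective _ (cast_div_inj 90 (by norm_num))]
  decide

lemma B11_sum2 : ∑ x ∈ B11, x^2 = 11/2 := by
  rw [B11, Finset.sum_image (fun x _ y _ h => cast_div_inj 78 (by norm_num) h)]
  have h : (∑ a ∈ A11, a^2) = (33462:ℤ) := by decide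
  have hc : (∑ a ∈ A11, ((a:ℚ))^2) = ((∑ a ∈ A11, a^2 : ℤ) : ℚ) := by push_cast; rfl
  calc ∑ a ∈ A11, ((a:ℚ)/78)^2 = (∑ a ∈ A11, ((a:ℚ))^2)/6084 := by
        rw [Finset.sum_div]
        apply Finset.sum_congr rfl
        intros; ring
    _ = 11/2 := by rw [hc, h]; norm_num

lemma B11_sum4 : ∑ x ∈ B11, x^4 = 33/8 := by
  rw [B11, Finset.sum_image (fun x _ y _ h => cast_div_inj 78 (by norm_num) h)]
  have h : (∑ a ∈ A11, a^4) = (152687106:ℤ) := by decide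
  have hc : (∑ a ∈ A11, ((a:ℚ))^4) = ((∑ a ∈ A11, a^4 : ℤ) : ℚ) := by push_cast; rfl
  calc ∑ a ∈ A11, ((a:ℚ)/78)^4 = (∑ a ∈ A11, ((a:ℚ))^4)/37015056 := by
        rw [Finset.sum_div]
        apply Finset.sum_congr rfl
        intros; ring
    _ = 33/8 := by rw [hc, h]; norm_num

lemma B19_sum2 : ∑ x ∈ B19, x^2 = 19/2 := by
  rw [B19, Finset.sum_image (fun x _ y _ h => cast_div_inj 90 (by norm_num) h)]
  have h : (∑ a ∈ A19, a^2) = (76950:ℤ) := by decide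
  have hc : (∑ a ∈ A19, ((a:ℚ))^2) = ((∑ a ∈ A19, a^2 : ℤ) : ℚ) := by push_cast; rfl
  calc ∑ a ∈ A19, ((a:ℚ)/90)^2 = (∑ a ∈ A19, ((a:ℚ))^2)/8100 := by
        rw [Finset.sum_div]
        apply Finset.sum_congr rfl
        intros; ring
    _ = 19/2 := by rw [hc, h]; norm_num

lemma B19_sum4 : ∑ x ∈ B19, x^4 = 57/8 := by
  rw [B19, Finset.sum_image (fun x _ y _ h => cast_div_inj 90 (by norm_num) h)]
  have h : (∑ a ∈ A19, a^4) = (467471250:ℤ) := by decide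
  have hc : (∑ a ∈ A19, ((a:ℚ))^4) = ((∑ a ∈ A19, a^4 : ℤ) : ℚ) := by push_cast; rfl
  calc ∑ a ∈ A19, ((a:ℚ)/90)^4 = (∑ a ∈ A19, ((a:ℚ))^4)/65610000 := by
        rw [Finset.sum_div]
        apply Finset.sum_congr rfl
        intros; ring
    _ = 57/8 := by rw [hc, h]; norm_num

lemma B11_ok : ∀ x ∈ B11, Ok x := by
  intro x hx
  rw [B11, Finset.mem_image] at hx
  obtain ⟨a, ha, rfl⟩ := hx
  rw [A11] at ha
  fin_cases ha <;> norm_num [Ok, zL, zR, zP]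

lemma B19_ok : ∀ x ∈ B19, Ok x := by
  intro x hx
  rw [B19, Finset.mem_image] at hx
  obtain ⟨a, ha, rfl⟩ := hx
  rw [A19] at ha
  fin_cases ha <;> norm_num [Ok, zL, zR, zP]







lemma half_to_full (N : ℕ) (T : Finset ℚ) (hbd : ∀ x ∈ T, 0 < x ∧ x < 1)
    (hcard : T.card = N) (h2 : ∑ x ∈ T, x^2 = N/2) (h4 : ∑ x ∈ T, x^4 = 3*N/8) :
    ∃ S : Finset ℚ, (∀ x ∈ S, -1 < x ∧ x < 1) ∧ S.card = 2 * N ∧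
      (∀ x ∈ S, -x ∈ S) ∧
      ∑ x ∈ S, x ^ 2 = (N : ℚ) ∧ ∑ x ∈ S, x ^ 4 = 3 * (N : ℚ) / 4 := by
  classical
  set S := T ∪ T.image (fun x => -x) with hS
  have hdisj : Disjoint T (T.image (fun x => -x)) := by
    rw [Finset.disjoint_left]
    intro x hx hx'
    rw [Finset.mem_image] at hx'
    obtain ⟨y, hy, rfl⟩ := hx'
    have := (hbd _ hy).1
    have := (hbd _ hx).1
    linarith
  have hinj : Function.Injective (fun x : ℚ => -x) := neg_injective
  refine ⟨S, ?_, ?_, ?_, ?_, ?_⟩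
  · intro x hx
    rw [hS, Finset.mem_union] at hx
    rcases hx with hx | hx
    · obtain ⟨h1, h2⟩ := hbd x hx
      constructor <;> linarith
    · rw [Finset.mem_image] at hx
      obtain ⟨y, hy, rfl⟩ := hx
      obtain ⟨h1, h2⟩ := hbd y hy
      constructor <;> linarith
  · rw [hS, Finset.card_union_of_disjoint hdisj, Finset.card_image_of_injective _ hinj, hcard]
    ring
  · intro x hx
    rw [hS, Finset.mem_union] at hx
    rw [hS]
    rcases hx with hx | hx
    · exact Finset.mem_union_right _ (Finset.mem_image_of_mem _ hx)
    · rw [Finset.mem_image] at hx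
      obtain ⟨y, hy, rfl⟩ := hx
      rw [neg_neg]
      exact Finset.mem_union_left _ hy
  · rw [hS, Finset.sum_union hdisj,
      Finset.sum_image (fun x _ y _ h => hinj h)]
    have : ∑ x ∈ T, (-x)^2 = ∑ x ∈ T, x^2 := by
      apply Finset.sum_congr rfl; intros; ring
    rw [this, h2]; ring
  · rw [hS, Finset.sum_union hdisj,
      Finset.sum_image (fun x _ y _ h => hinj h)]
    have : ∑ x ∈ T, (-x)^4 = ∑ x ∈ T, x^4 := by
      apply Finset.sum_congr rfl; intros; ring
    rw [this, h4]; ring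

lemma construct (N : ℕ)
    (h : (∃ k : ℕ, 1 ≤ k ∧ N = 3 * k) ∨ (∃ k : ℕ, 6 ≤ k ∧ N = 3 * k + 1) ∨
      (∃ k : ℕ, 3 ≤ k ∧ N = 3 * k + 2)) :
    ∃ S : Finset ℚ, (∀ x ∈ S, -1 < x ∧ x < 1) ∧ S.card = 2 * N ∧
      (∀ x ∈ S, -x ∈ S) ∧
      ∑ x ∈ S, x ^ 2 = (N : ℚ) ∧ ∑ x ∈ S, x ^ 4 = 3 * (N : ℚ) / 4 := by
  have hOkE : ∀ x ∈ (∅ : Finset ℚ), Ok x := fun x hx => absurd hx (Finset.notMem_empty x)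
  rcases h with ⟨k, hk, rfl⟩ | ⟨k, hk, rfl⟩ | ⟨k, hk, rfl⟩
  · apply half_to_full _ (TD ∅ k) (TD_bounds ∅ k hOkE)
    · rw [TD_card ∅ k hOkE]; simp
    · rw [TD_sum2 ∅ k hOkE]; push_cast; simp
    · rw [TD_sum4 ∅ k hOkE]; push_cast; simp; ring
  · apply half_to_full _ (TD B19 (k-6)) (TD_bounds B19 (k-6) B19_ok)
    · rw [TD_card B19 (k-6) B19_ok, B19_card]; omega
    · rw [TD_sum2 B19 (k-6) B19_ok, B19_sum2]
      have : ((k - 6 : ℕ) : ℚ) = (k : ℚ) - 6 := by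
        push_cast [Nat.cast_sub hk]; ring
      rw [this]; push_cast; ring
    · rw [TD_sum4 B19 (k-6) B19_ok, B19_sum4]
      have : ((k - 6 : ℕ) : ℚ) = (k : ℚ) - 6 := by
        push_cast [Nat.cast_sub hk]; ring
      rw [this]; push_cast; ring
  · apply half_to_full _ (TD B11 (k-3)) (TD_bounds B11 (k-3) B11_ok)
    · rw [TD_card B11 (k-3) B11_ok, B11_card]; omega
    · rw [TD_sum2 B11 (k-3) B11_ok, B11_sum2]
      have : ((k - 3 : ℕ) : ℚ) = (k : ℚ) - 3 := by
        push_cast [Nat.cast_sub hk]; ring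
      rw [this]; push_cast; ring
    · rw [TD_sum4 B11 (k-3) B11_ok, B11_sum4]
      have : ((k - 3 : ℕ) : ℚ) = (k : ℚ) - 3 := by
        push_cast [Nat.cast_sub hk]; ring
      rw [this]; push_cast; ring

lemma classify (N : ℕ) (h0 : 0 < N)
    (h : ¬((∃ k : ℕ, 1 ≤ k ∧ N = 3 * k) ∨ (∃ k : ℕ, 6 ≤ k ∧ N = 3 * k + 1) ∨
      (∃ k : ℕ, 3 ≤ k ∧ N = 3 * k + 2))) :
    N = 1 ∨ N = 2 ∨ N = 4 ∨ N = 5 ∨ N = 7 ∨ N = 8 ∨ N = 10 ∨ N = 13 ∨ N = 16 := by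
  push_neg at h
  obtain ⟨h1, h2, h3⟩ := h
  have a1 := h1 (N / 3)
  have a2 := h2 (N / 3)
  have a3 := h3 (N / 3)
  omega



end Cheb5
end

/-- Theorem 1.4: there exists an antipodal 5-design with `2N` rational points for the
Chebyshev measure iff `N = 3k (k ≥ 1)`, `N = 3k+1 (k ≥ 6)`, or `N = 3k+2 (k ≥ 3)`. -/
theorem stmt_5 (N : ℕ) (hN : 0 < N) :
    (∃ S : Finset ℚ, (∀ x ∈ S, -1 < x ∧ x < 1) ∧ S.card = 2 * N ∧
      (∀ x ∈ S, -x ∈ S) ∧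
      ∑ x ∈ S, x ^ 2 = (N : ℚ) ∧ ∑ x ∈ S, x ^ 4 = 3 * (N : ℚ) / 4) ↔
    ((∃ k : ℕ, 1 ≤ k ∧ N = 3 * k) ∨ (∃ k : ℕ, 6 ≤ k ∧ N = 3 * k + 1) ∨
      (∃ k : ℕ, 3 ≤ k ∧ N = 3 * k + 2)) := by
  constructor
  · intro hS
    by_contra h
    obtain ⟨S, hbd, hcard, hneg, hs2, hs4⟩ := hS
    obtain ⟨P, hPpos, hPcard, hP2, hP4, hPsub⟩ := Cheb5.halve N S hcard hneg hs2 hs4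
    obtain ⟨c, A, hc, hAcard, h2, h8, hodd⟩ := Cheb5.extract N P hPcard hP2 hP4
    exact Cheb5.noSol N (Cheb5.classify N hN h) c hc A hAcard h2 h8 hodd
  · exact Cheb5.construct N
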